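/- The linear equation q𝔊 = (1-r)𝔉 for q has a positive solution when 0 < p < 1: with g* = (1-p)^{1/r}, 𝔊(p) = 1 + 2p(1-r)/r - g*^{2(r-1)} and 𝔉(p) = r/(1-r) + 2p + p²(2-r)/r - (r/(1-r))g*^{2(r-1)}, both 𝔊(p) and 𝔉(p) are strictly negative for 0 < p < 1, hence q* = (1-r)𝔉/𝔊 > 0. -/

import Mathlib

open Real Set

/-- Strict Bernoulli for negative exponents: for `1 < c` and `0 < t < 1`,
`1 + c*t < (1-t)^(-c)`. -/
lemma bern_aux_15 {c t : ℝ} (hc : 1 < c) (ht0 : 0 < t) (ht1 : t < 1) :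
    1 + c * t < (1 - t) ^ (-c) := by
  have h1t : (0:ℝ) < 1 - t := by linarith
  have hs : (0:ℝ) < t / (1 - t) := div_pos ht0 h1t
  have key := one_add_mul_self_lt_rpow_one_add (s := t / (1 - t))
    (by linarith : (-1:ℝ) ≤ t / (1 - t)) (ne_of_gt hs) hc
  have e1 : 1 + t / (1 - t) = (1 - t)⁻¹ := by field_simp; ring
  have e2 : ((1 - t)⁻¹) ^ c = (1 - t) ^ (-c) := by
    rw [Real.rpow_neg h1t.le, ← Real.inv_rpow h1t.le]
  have hlt : t < t / (1 - t) := by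
    rw [lt_div_iff₀ h1t]; nlinarith
  calc 1 + c * t < 1 + c * (t / (1 - t)) := by nlinarith
    _ < (1 + t / (1 - t)) ^ c := key
    _ = (1 - t) ^ (-c) := by rw [e1, e2]

/-- Key second-order inequality: `(1-p)^(-2a) > 1 + 2ap + a(2a+1)p²`. -/
lemma key_aux_15 {a p : ℝ} (ha : 0 < a) (hp0 : 0 < p) (hp1 : p < 1) :
    1 + 2 * a * p + a * (2 * a + 1) * p ^ 2 < (1 - p) ^ (-(2 * a)) := by
  set F : ℝ → ℝ := fun t => (1 - t) ^ (-(2 * a)) - (1 + 2 * a * t + a * (2 * a + 1) * t ^ 2)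
    with hF
  have hmono : StrictMonoOn F (Icc 0 p) := by
    apply strictMonoOn_of_deriv_pos (convex_Icc 0 p)
    · apply ContinuousOn.sub
      · apply ContinuousOn.rpow_const (by fun_prop)
        intro x hx
        exact Or.inl (by simp only [mem_Icc] at hx; intro h; nlinarith [hx.2])
      · fun_prop
    · intro x hx
      rw [interior_Icc, mem_Ioo] at hx
      obtain ⟨hx0, hxp⟩ := hx
      have hx1 : (0:ℝ) < 1 - x := by linarith
      have hbase : HasDerivAt (fun t : ℝ => 1 - t) (-1) x := (hasDerivAt_id x).const_sub 1
      have hpow : HasDerivAt (fun y : ℝ => y ^ (-(2 * a)))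
          (-(2 * a) * (1 - x) ^ (-(2 * a) - 1)) (1 - x) :=
        Real.hasDerivAt_rpow_const (Or.inl (ne_of_gt hx1))
      have hcomp : HasDerivAt (fun t : ℝ => (1 - t) ^ (-(2 * a)))
          ((-(2 * a) * (1 - x) ^ (-(2 * a) - 1)) * (-1)) x := hpow.comp x hbase
      have hpoly : HasDerivAt (fun t : ℝ => 1 + 2 * a * t + a * (2 * a + 1) * t ^ 2)
          (0 + 2 * a * 1 + a * (2 * a + 1) * (↑2 * x ^ (2 - 1))) x := by
        exact ((hasDerivAt_const x (1:ℝ)).add ((hasDerivAt_id x).const_mul (2 * a))).add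
          ((hasDerivAt_pow 2 x).const_mul (a * (2 * a + 1)))
      have hFd := hcomp.sub hpoly
      rw [(show HasDerivAt F _ x from hFd).deriv]
      have hexp : -(2 * a) - 1 = -(2 * a + 1) := by ring
      rw [hexp]
      have hx21 : x ^ (2 - 1) = x := pow_one x
      rw [hx21]
      have hb := bern_aux_15 (c := 2 * a + 1) (by linarith) hx0 (by linarith)
      have h2a : (0:ℝ) < 2 * a := by linarith
      nlinarith [mul_lt_mul_of_pos_left hb h2a]
  have h0 : F 0 = 0 := by
    simp [hF, Real.one_rpow]
  have hmem0 : (0:ℝ) ∈ Icc (0:ℝ) p := ⟨le_rfl, hp0.le⟩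
  have hmemp : p ∈ Icc (0:ℝ) p := ⟨hp0.le, le_rfl⟩
  have := hmono hmem0 hmemp hp0
  rw [h0] at this
  simp only [hF] at this
  linarith

theorem stmt_15 (r p : ℝ) (hr0 : 0 < r) (hr1 : r < 1) (hp0 : 0 < p) (hp1 : p < 1) :
    1 + 2 * p * (1 - r) / r - (1 - p) ^ (2 * (r - 1) / r) < 0 ∧
    r / (1 - r) + 2 * p + p ^ 2 * (2 - r) / r
      - (r / (1 - r)) * (1 - p) ^ (2 * (r - 1) / r) < 0 ∧
    0 < (1 - r) * (r / (1 - r) + 2 * p + p ^ 2 * (2 - r) / r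
          - (r / (1 - r)) * (1 - p) ^ (2 * (r - 1) / r))
        / (1 + 2 * p * (1 - r) / r - (1 - p) ^ (2 * (r - 1) / r)) := by
  have hr1' : (0:ℝ) < 1 - r := by linarith
  set a : ℝ := (1 - r) / r with ha
  have ha0 : 0 < a := div_pos hr1' hr0
  have hexp : 2 * (r - 1) / r = -(2 * a) := by
    rw [ha]; field_simp; ring
  rw [hexp]
  have key := key_aux_15 ha0 hp0 hp1
  set g : ℝ := (1 - p) ^ (-(2 * a)) with hg
  -- coefficient identities
  have e1 : 2 * p * (1 - r) / r = 2 * a * p := by rw [ha]; ring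
  have e2 : p ^ 2 * (2 - r) / r = (2 * a + 1) * p ^ 2 := by
    rw [ha]; field_simp; ring
  set b : ℝ := r / (1 - r) with hb
  have hb0 : 0 < b := div_pos hr0 hr1'
  have hab : b * (1 + 2 * a * p + a * (2 * a + 1) * p ^ 2)
      = b + 2 * p + (2 * a + 1) * p ^ 2 := by
    rw [hb, ha]; field_simp
  have hG : 1 + 2 * p * (1 - r) / r - g < 0 := by
    rw [e1]
    nlinarith [sq_nonneg p, mul_pos ha0 (mul_pos hp0 hp0)]
  have hbg := mul_lt_mul_of_pos_left key hb0
  rw [hab] at hbg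
  have hF : b + 2 * p + p ^ 2 * (2 - r) / r - b * g < 0 := by
    rw [e2]; linarith
  refine ⟨hG, hF, ?_⟩
  exact div_pos_of_neg_of_neg (mul_neg_of_pos_of_neg hr1' hF) hG
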